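/- Let γ > 0, let Φ satisfy the standing potential assumptions for γ, and set m := inf{Φ″(r) : |r| ≤ √(2γ)}. For W ∈ B_γ with P(W) > 0 define the improvement operator T_γ[W] := (√(2γ)/‖∂P(W)‖₂)·∂P(W) (well defined since ∂P(W) ≠ 0). Then T_γ[W] ∈ ∂B_γ (i.e. (1/2)‖T_γ[W]‖₂² = γ), P(T_γ[W]) > 0, and P(T_γ[W]) − P(W) ≥ (m/2)‖Ā(T_γ[W]) − ĀW‖₂²; moreover P(T_γ[W]) = P(W) holds if and only if T_γ[W] = W. -/

import Mathlib

open MeasureTheory Real Filter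

/-- Averaging operator `(Ā W)(φ) = ∫_{φ-1/2}^{φ+1/2} W(ψ) dψ`. -/
noncomputable def avg (W : ℝ → ℝ) (φ : ℝ) : ℝ := ∫ ψ in (φ - 1/2)..(φ + 1/2), W ψ

/-- `Φ'`, the derivative of the potential, taken within the relevant interval. -/
noncomputable def Phi' (Φ : ℝ → ℝ) (γ : ℝ) : ℝ → ℝ :=
  fun r => derivWithin Φ (Set.Icc (-Real.sqrt (2*γ)) (Real.sqrt (2*γ))) r

/-- `Φ''`, the second derivative of the potential, taken within the relevant interval. -/
noncomputable def Phi'' (Φ : ℝ → ℝ) (γ : ℝ) : ℝ → ℝ :=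
  fun r => iteratedDerivWithin 2 Φ (Set.Icc (-Real.sqrt (2*γ)) (Real.sqrt (2*γ))) r

/-- Standing assumptions on the potential `Φ` for parameter `γ`:
`Φ` is `C²` on `[-√(2γ), √(2γ)]`, convex there (`Φ'' ≥ 0`), normalised
(`Φ(0) = Φ'(0) = 0`), and does not vanish identically on this interval. -/
def StandingAssumptions (Φ : ℝ → ℝ) (γ : ℝ) : Prop :=
  ContDiffOn ℝ 2 Φ (Set.Icc (-Real.sqrt (2*γ)) (Real.sqrt (2*γ))) ∧
  (∀ r ∈ Set.Icc (-Real.sqrt (2*γ)) (Real.sqrt (2*γ)), 0 ≤ Phi'' Φ γ r) ∧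
  Φ 0 = 0 ∧ Phi' Φ γ 0 = 0 ∧
  ∃ r ∈ Set.Icc (-Real.sqrt (2*γ)) (Real.sqrt (2*γ)), Φ r ≠ 0

/-- `β = Φ''(0)`. -/
noncomputable def betaOf (Φ : ℝ → ℝ) (γ : ℝ) : ℝ := Phi'' Φ γ 0

/-- Potential energy functional `P(W) = ∫_ℝ Φ((ĀW)(φ)) dφ`. -/
noncomputable def PE (Φ : ℝ → ℝ) (W : ℝ → ℝ) : ℝ := ∫ φ : ℝ, Φ (avg W φ)

/-- Gâteaux derivative `∂P(W) = Ā(Φ' ∘ (ĀW))`. -/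
noncomputable def dPE (Φ : ℝ → ℝ) (γ : ℝ) (W : ℝ → ℝ) : ℝ → ℝ :=
  avg (fun ψ => Phi' Φ γ (avg W ψ))

/-- Membership in the ball `B_γ = {W ∈ L²(ℝ) : (1/2)‖W‖₂² ≤ γ}`. -/
def memB (γ : ℝ) (W : ℝ → ℝ) : Prop :=
  MemLp W 2 volume ∧ (∫ φ : ℝ, (W φ)^2) ≤ 2*γ

/-- The improvement operator `T_γ[W] = (√(2γ)/‖∂P(W)‖₂) ∂P(W)`. -/
noncomputable def Timp (Φ : ℝ → ℝ) (γ : ℝ) (W : ℝ → ℝ) : ℝ → ℝ :=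
  fun φ => (Real.sqrt (2*γ) / Real.sqrt (∫ ψ : ℝ, (dPE Φ γ W ψ)^2)) * dPE Φ γ W φ


open Set ENNReal

lemma memLp_intervalIntegrable {U : ℝ → ℝ} (hU : MemLp U 2 volume) (a b : ℝ) :
    IntervalIntegrable U volume a b :=
  ((hU.locallyIntegrable one_le_two).integrableOn_isCompact isCompact_uIcc).intervalIntegrable

lemma continuous_avg {U : ℝ → ℝ} (hU : MemLp U 2 volume) : Continuous (avg U) := by
  have h : ∀ a b, IntervalIntegrable U volume a b := memLp_intervalIntegrable hU
  have h1 := intervalIntegral.continuous_primitive h 0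
  have : avg U = fun φ => (∫ t in (0:ℝ)..(φ + 1/2), U t) - ∫ t in (0:ℝ)..(φ - 1/2), U t := by
    funext φ
    have := intervalIntegral.integral_add_adjacent_intervals (h 0 (φ - 1/2)) (h (φ - 1/2) (φ + 1/2))
    unfold avg; linarith
  rw [this]
  exact ((h1.comp (continuous_id.add continuous_const)).sub
    (h1.comp (continuous_id.sub continuous_const)))

lemma avg_eq_setIntegral (U : ℝ → ℝ) (φ : ℝ) :
    avg U φ = ∫ ψ in Ioc (φ - 1/2) (φ + 1/2), U ψ :=
  intervalIntegral.integral_of_le (by linarith)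

lemma avg_congr_ae {U U' : ℝ → ℝ} (h : U =ᵐ[volume] U') : avg U = avg U' := by
  funext φ
  rw [avg_eq_setIntegral, avg_eq_setIntegral]
  exact integral_congr_ae (ae_restrict_of_ae h)

lemma avg_smul (c : ℝ) (U : ℝ → ℝ) : avg (fun ψ => c * U ψ) = fun φ => c * avg U φ := by
  funext φ; unfold avg; exact intervalIntegral.integral_const_mul c U

lemma sq_avg_le_setIntegral {U : ℝ → ℝ} (hU : MemLp U 2 volume) (φ : ℝ) :
    (avg U φ)^2 ≤ ∫ ψ in Ioc (φ - 1/2) (φ + 1/2), (U ψ)^2 := by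
  set μ := volume.restrict (Ioc (φ - 1/2) (φ + 1/2)) with hμ
  have hvol : volume (Ioc (φ - 1/2) (φ + 1/2)) = 1 := by
    rw [Real.volume_Ioc]; norm_num
  have hμuniv : μ Set.univ = 1 := by rw [hμ, Measure.restrict_apply MeasurableSet.univ,
    Set.univ_inter, hvol]
  have hint : IntegrableOn U (Ioc (φ - 1/2) (φ + 1/2)) volume :=
    (memLp_intervalIntegrable hU (φ - 1/2) (φ + 1/2)).1
  have hint2 : IntegrableOn (fun ψ => (U ψ)^2) (Ioc (φ - 1/2) (φ + 1/2)) volume := by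
    have : Integrable (fun ψ => (U ψ)^2) volume :=
      (memLp_two_iff_integrable_sq hU.aestronglyMeasurable).1 hU
    exact this.integrableOn
  set b := ∫ ψ in Ioc (φ - 1/2) (φ + 1/2), (U ψ)^2 with hb
  have hb0 : 0 ≤ b := integral_nonneg fun ψ => sq_nonneg _
  set J := ∫ ψ in Ioc (φ - 1/2) (φ + 1/2), |U ψ| with hJ
  have hJ0 : 0 ≤ J := integral_nonneg fun ψ => abs_nonneg _
  have havgJ : |avg U φ| ≤ J := by
    rw [avg_eq_setIntegral]
    exact (norm_integral_le_integral_norm U).trans_eq (by simp [hJ, Real.norm_eq_abs])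
  have key : ∀ ε : ℝ, 0 < ε → J ≤ (ε * b + 1/ε) / 2 := by
    intro ε hε
    have hptw : ∀ ψ, |U ψ| ≤ (ε * (U ψ)^2 + 1/ε) / 2 := by
      intro ψ
      set x := |U ψ| with hx
      have h2 : (U ψ)^2 = x^2 := (sq_abs _).symm
      have h1 : 0 ≤ (ε*x - 1)^2/ε := div_nonneg (sq_nonneg _) hε.le
      have heq : (ε*x-1)^2/ε = ε*x^2 - 2*x + 1/ε := by field_simp; ring
      rw [h2]; linarith [h1.trans_eq heq]
    have hmono : J ≤ ∫ ψ in Ioc (φ - 1/2) (φ + 1/2), (ε * (U ψ)^2 + 1/ε) / 2 := by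
      apply integral_mono hint.abs
      · exact (((hint2.const_mul ε).add (integrableOn_const (by
          rw [hvol]; exact ENNReal.one_ne_top))).div_const 2)
      · exact hptw
    calc J ≤ ∫ ψ in Ioc (φ - 1/2) (φ + 1/2), (ε * (U ψ)^2 + 1/ε) / 2 := hmono
      _ = (ε * b + 1/ε) / 2 := by
        have hconst : ∫ _ψ in Ioc (φ - 1/2) (φ + 1/2), (1/ε) = 1/ε := by
          rw [setIntegral_const, measureReal_def, hvol]; simp
        rw [integral_div, integral_add (hint2.const_mul ε)
          (integrableOn_const (by rw [hvol]; exact ENNReal.one_ne_top)),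
          integral_const_mul, hconst]
  have hJb : J^2 ≤ b := by
    rcases eq_or_lt_of_le hb0 with hb' | hb'
    · have hJ0' : J = 0 := by
        by_contra hc
        have hJpos : 0 < J := lt_of_le_of_ne hJ0 (Ne.symm hc)
        have h := key (1/J) (by positivity)
        rw [← hb'] at h
        rw [one_div_one_div] at h
        simp only [mul_zero, zero_add] at h
        linarith
      rw [hJ0', ← hb']
      simp
    · have h := key (1/Real.sqrt b) (by positivity)
      have hsb : (0:ℝ) < Real.sqrt b := Real.sqrt_pos.2 hb'
      have hsq : Real.sqrt b * Real.sqrt b = b := Real.mul_self_sqrt hb0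
      have h1 : (1 / Real.sqrt b) * b = Real.sqrt b := by
        rw [one_div_mul_eq_div, div_eq_iff hsb.ne']; exact hsq.symm
      rw [h1, one_div_one_div] at h
      have hJsb : J ≤ Real.sqrt b := by linarith
      nlinarith
  calc (avg U φ)^2 = |avg U φ|^2 := (sq_abs _).symm
    _ ≤ J^2 := pow_le_pow_left₀ (abs_nonneg _) havgJ 2
    _ ≤ b := hJb

lemma integrable_sq_of_memLp {U : ℝ → ℝ} (hU : MemLp U 2 volume) :
    Integrable (fun ψ => (U ψ)^2) volume :=
  (memLp_two_iff_integrable_sq hU.aestronglyMeasurable).1 hU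

def Strip : Set (ℝ × ℝ) := {p : ℝ × ℝ | p.1 - 1/2 < p.2 ∧ p.2 ≤ p.1 + 1/2}

lemma measurableSet_Strip : MeasurableSet Strip := by
  have : Strip = {p : ℝ × ℝ | p.1 - 1/2 < p.2} ∩ {p : ℝ × ℝ | p.2 ≤ p.1 + 1/2} := rfl
  rw [this]
  exact (measurableSet_lt (measurable_fst.sub measurable_const) measurable_snd).inter
    (measurableSet_le measurable_snd (measurable_fst.add measurable_const))

lemma strip_indicator_eq (f : ℝ → ℝ≥0∞) (ψ φ : ℝ) :
    Strip.indicator (fun p => f p.2) (φ, ψ) =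
      (Ico (ψ - 1/2) (ψ + 1/2)).indicator (fun _ => f ψ) φ := by
  by_cases h : φ ∈ Ico (ψ - 1/2) (ψ + 1/2)
  · rw [Set.indicator_of_mem h, Set.indicator_of_mem]
    simp only [Set.mem_Ico] at h
    exact ⟨by linarith [h.1, h.2], by linarith [h.1, h.2]⟩
  · rw [Set.indicator_of_notMem h, Set.indicator_of_notMem]
    intro hc
    obtain ⟨h1, h2⟩ := hc
    simp only [Set.mem_Ico] at h
    exact h ⟨by simp at h1 h2 ⊢; linarith, by simp at h1 h2 ⊢; linarith⟩

lemma lintegral_avg_sq_le {U : ℝ → ℝ} (hU : MemLp U 2 volume) :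
    (∫⁻ φ, ENNReal.ofReal ((avg U φ)^2)) ≤ ∫⁻ ψ, ENNReal.ofReal ((U ψ)^2) := by
  have hm : AEMeasurable U volume := hU.aestronglyMeasurable.aemeasurable
  have hm2 : AEMeasurable (fun ψ => (U ψ)^2) volume := by
    exact hm.pow_const 2
  set f : ℝ → ℝ≥0∞ := fun ψ => ENNReal.ofReal ((U ψ)^2) with hf
  have hfm : AEMeasurable f volume := hm2.ennreal_ofReal
  have step1 : ∀ φ, ENNReal.ofReal ((avg U φ)^2) ≤ ∫⁻ ψ in Ioc (φ - 1/2) (φ + 1/2), f ψ := by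
    intro φ
    calc ENNReal.ofReal ((avg U φ)^2)
        ≤ ENNReal.ofReal (∫ ψ in Ioc (φ - 1/2) (φ + 1/2), (U ψ)^2) :=
          ENNReal.ofReal_le_ofReal (sq_avg_le_setIntegral hU φ)
      _ = ∫⁻ ψ in Ioc (φ - 1/2) (φ + 1/2), f ψ :=
          ofReal_integral_eq_lintegral_ofReal (integrable_sq_of_memLp hU).integrableOn
            (Eventually.of_forall fun ψ => sq_nonneg _)
  have hswapm : AEMeasurable (fun p : ℝ × ℝ => Strip.indicator (fun q => f q.2) p)
      (volume.prod volume) :=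
    (hfm.comp_quasiMeasurePreserving Measure.quasiMeasurePreserving_snd).indicator
      measurableSet_Strip
  calc (∫⁻ φ, ENNReal.ofReal ((avg U φ)^2))
      ≤ ∫⁻ φ, ∫⁻ ψ in Ioc (φ - 1/2) (φ + 1/2), f ψ := lintegral_mono step1
    _ = ∫⁻ φ, ∫⁻ ψ, Strip.indicator (fun q => f q.2) (φ, ψ) := by
        apply lintegral_congr; intro φ
        rw [← lintegral_indicator measurableSet_Ioc _]
        apply lintegral_congr; intro ψ
        by_cases h : ψ ∈ Ioc (φ - 1/2) (φ + 1/2)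
        · have h' : (φ, ψ) ∈ Strip := ⟨h.1, h.2⟩
          rw [Set.indicator_of_mem h, Set.indicator_of_mem h']
        · rw [Set.indicator_of_notMem h, Set.indicator_of_notMem
            (fun hc => h ⟨hc.1, hc.2⟩)]
    _ = ∫⁻ ψ, ∫⁻ φ, Strip.indicator (fun q => f q.2) (φ, ψ) := lintegral_lintegral_swap hswapm
    _ = ∫⁻ ψ, f ψ := by
        apply lintegral_congr; intro ψ
        rw [show (fun φ => Strip.indicator (fun q => f q.2) (φ, ψ))
            = fun φ => (Ico (ψ - 1/2) (ψ + 1/2)).indicator (fun _ => f ψ) φ from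
          funext fun φ => strip_indicator_eq f ψ φ]
        rw [lintegral_indicator measurableSet_Ico _, setLIntegral_const]
        rw [Real.volume_Ico]
        norm_num

lemma integrable_avg_sq {U : ℝ → ℝ} (hU : MemLp U 2 volume) :
    Integrable (fun φ => (avg U φ)^2) volume := by
  refine ⟨((continuous_avg hU).pow 2).aestronglyMeasurable, ?_⟩
  rw [hasFiniteIntegral_iff_ofReal (Eventually.of_forall fun φ => sq_nonneg _)]
  refine lt_of_le_of_lt (lintegral_avg_sq_le hU) ?_
  rw [← hasFiniteIntegral_iff_ofReal (Eventually.of_forall fun φ => sq_nonneg _)]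
  exact (integrable_sq_of_memLp hU).hasFiniteIntegral

lemma memLp_avg {U : ℝ → ℝ} (hU : MemLp U 2 volume) : MemLp (avg U) 2 volume :=
  (memLp_two_iff_integrable_sq (continuous_avg hU).aestronglyMeasurable).2 (integrable_avg_sq hU)

lemma integrable_mul_of_memLp {f g : ℝ → ℝ} (hf : MemLp f 2 volume) (hg : MemLp g 2 volume) :
    Integrable (fun x => f x * g x) volume := by
  have h1 : Integrable (fun x => ((f x)^2 + (g x)^2)/2) volume :=
    ((integrable_sq_of_memLp hf).add (integrable_sq_of_memLp hg)).div_const 2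
  refine h1.mono' (hf.aestronglyMeasurable.mul hg.aestronglyMeasurable) ?_
  filter_upwards with x
  rw [Real.norm_eq_abs, abs_mul]
  nlinarith [sq_nonneg (|f x| - |g x|), sq_abs (f x), sq_abs (g x), abs_nonneg (f x),
    abs_nonneg (g x)]

lemma avg_adjoint_core {g U : ℝ → ℝ} (hgc : Continuous g) (hg : MemLp g 2 volume)
    (hU : MemLp U 2 volume) (hUm : StronglyMeasurable U) :
    ∫ φ, avg g φ * U φ = ∫ ψ, g ψ * avg U ψ := by
  classical
  set k : ℝ × ℝ → ℝ := fun p => Strip.indicator (fun q => U q.1 * g q.2) p with hk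
  have hsm : StronglyMeasurable k :=
    ((hUm.comp_measurable measurable_fst).mul
      (hgc.stronglyMeasurable.comp_measurable measurable_snd)).indicator measurableSet_Strip
  have hgabs : MemLp (fun x => |g x|) 2 volume := by simpa [Real.norm_eq_abs] using hg.norm
  have hUabs : MemLp (fun x => |U x|) 2 volume := by simpa [Real.norm_eq_abs] using hU.norm
  have hgabsc : Continuous (fun x => |g x|) := hgc.abs
  set h : ℝ → ℝ := avg (fun x => |g x|) with hh
  have hh2 : MemLp h 2 volume := memLp_avg hgabs
  have hnonneg : ∀ φ, 0 ≤ h φ := fun φ => by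
    rw [hh, avg_eq_setIntegral]
    exact setIntegral_nonneg measurableSet_Ioc (fun x _ => abs_nonneg _)
  have hmul : Integrable (fun φ => |U φ| * h φ) volume := integrable_mul_of_memLp hUabs hh2
  -- integrability on the product
  have hint_prod : Integrable k (volume.prod volume) := by
    refine ⟨hsm.aestronglyMeasurable, ?_⟩
    have hkm : AEMeasurable (fun p : ℝ × ℝ => ENNReal.ofReal ‖k p‖) (volume.prod volume) :=
      (hsm.measurable.norm.ennreal_ofReal).aemeasurable
    rw [hasFiniteIntegral_iff_norm, lintegral_prod _ hkm]
    have inner_eq : ∀ φ : ℝ, (∫⁻ ψ, ENNReal.ofReal ‖k (φ, ψ)‖)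
        = ENNReal.ofReal (|U φ| * h φ) := by
      intro φ
      have e1 : ∀ ψ, ENNReal.ofReal ‖k (φ, ψ)‖
          = (Ioc (φ-1/2) (φ+1/2)).indicator (fun ψ => ENNReal.ofReal (|U φ| * |g ψ|)) ψ := by
        intro ψ
        by_cases hmem : ψ ∈ Ioc (φ-1/2) (φ+1/2)
        · have h' : (φ, ψ) ∈ Strip := ⟨hmem.1, hmem.2⟩
          rw [Set.indicator_of_mem hmem, hk]
          simp only [Set.indicator_of_mem h']
          rw [Real.norm_eq_abs, abs_mul]
        · rw [Set.indicator_of_notMem hmem, hk]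
          simp only [Set.indicator_of_notMem (fun hc : (φ,ψ) ∈ Strip => hmem ⟨hc.1, hc.2⟩)]
          simp
      have hint' : IntegrableOn (fun ψ => |U φ| * |g ψ|) (Ioc (φ-1/2) (φ+1/2)) volume :=
        ((memLp_intervalIntegrable hgabs (φ-1/2) (φ+1/2)).1).const_mul _
      calc (∫⁻ ψ, ENNReal.ofReal ‖k (φ, ψ)‖)
          = ∫⁻ ψ in Ioc (φ-1/2) (φ+1/2), ENNReal.ofReal (|U φ| * |g ψ|) := by
            rw [← lintegral_indicator measurableSet_Ioc]
            exact lintegral_congr e1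
        _ = ENNReal.ofReal (∫ ψ in Ioc (φ-1/2) (φ+1/2), |U φ| * |g ψ|) :=
            (ofReal_integral_eq_lintegral_ofReal hint'
              (Eventually.of_forall fun ψ => mul_nonneg (abs_nonneg _) (abs_nonneg _))).symm
        _ = ENNReal.ofReal (|U φ| * h φ) := by
            rw [integral_const_mul, hh, avg_eq_setIntegral]
    rw [lintegral_congr inner_eq,
      ← hasFiniteIntegral_iff_ofReal (Eventually.of_forall fun φ =>
        mul_nonneg (abs_nonneg _) (hnonneg φ))]
    exact hmul.hasFiniteIntegral
  have swap : ∫ φ, (∫ ψ, k (φ, ψ)) = ∫ ψ, (∫ φ, k (φ, ψ)) :=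
    integral_integral_swap (by exact hint_prod)
  have lhs_eq : ∀ φ : ℝ, (∫ ψ, k (φ, ψ)) = U φ * avg g φ := by
    intro φ
    have e1 : ∀ ψ, k (φ, ψ) = (Ioc (φ-1/2) (φ+1/2)).indicator (fun ψ => U φ * g ψ) ψ := by
      intro ψ
      by_cases hmem : ψ ∈ Ioc (φ-1/2) (φ+1/2)
      · have h' : (φ, ψ) ∈ Strip := ⟨hmem.1, hmem.2⟩
        rw [hk]
        simp only [Set.indicator_of_mem h', Set.indicator_of_mem hmem]
      · rw [hk]
        simp only [Set.indicator_of_notMem (fun hc : (φ,ψ) ∈ Strip => hmem ⟨hc.1, hc.2⟩),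
          Set.indicator_of_notMem hmem]
    rw [show (fun ψ => k (φ, ψ)) = fun ψ => (Ioc (φ-1/2) (φ+1/2)).indicator
        (fun ψ => U φ * g ψ) ψ from funext e1]
    rw [integral_indicator measurableSet_Ioc, integral_const_mul, avg_eq_setIntegral]
  have rhs_eq : ∀ ψ : ℝ, (∫ φ, k (φ, ψ)) = g ψ * avg U ψ := by
    intro ψ
    have e1 : ∀ φ, k (φ, ψ) = (Ico (ψ-1/2) (ψ+1/2)).indicator (fun φ => U φ * g ψ) φ := by
      intro φ
      by_cases hmem : φ ∈ Ico (ψ-1/2) (ψ+1/2)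
      · simp only [Set.mem_Ico] at hmem
        have h' : (φ, ψ) ∈ Strip := ⟨by linarith [hmem.1, hmem.2], by linarith [hmem.1, hmem.2]⟩
        rw [hk]
        simp only [Set.indicator_of_mem h',
          Set.indicator_of_mem (show φ ∈ Ico (ψ-1/2) (ψ+1/2) from Set.mem_Ico.2 hmem)]
      · have h' : (φ, ψ) ∉ Strip := by
          intro hc
          exact hmem (Set.mem_Ico.2 ⟨by linarith [hc.1, hc.2], by linarith [hc.1, hc.2]⟩)
        rw [hk]
        simp only [Set.indicator_of_notMem h', Set.indicator_of_notMem hmem]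
    rw [show (fun φ => k (φ, ψ)) = fun φ => (Ico (ψ-1/2) (ψ+1/2)).indicator
        (fun φ => U φ * g ψ) φ from funext e1]
    rw [integral_indicator measurableSet_Ico, integral_Ico_eq_integral_Ioo,
      ← integral_Ioc_eq_integral_Ioo,
      integral_mul_const, avg_eq_setIntegral, mul_comm]
  calc ∫ φ, avg g φ * U φ = ∫ φ, (∫ ψ, k (φ, ψ)) := by
        apply integral_congr_ae; filter_upwards with φ; rw [lhs_eq φ, mul_comm]
    _ = ∫ ψ, (∫ φ, k (φ, ψ)) := swap
    _ = ∫ ψ, g ψ * avg U ψ := by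
        apply integral_congr_ae; filter_upwards with ψ; rw [rhs_eq ψ]

lemma avg_adjoint {g U : ℝ → ℝ} (hgc : Continuous g) (hg : MemLp g 2 volume)
    (hU : MemLp U 2 volume) :
    ∫ φ, avg g φ * U φ = ∫ ψ, g ψ * avg U ψ := by
  have hae : U =ᵐ[volume] hU.aestronglyMeasurable.mk U := hU.aestronglyMeasurable.ae_eq_mk
  have hU'2 : MemLp (hU.aestronglyMeasurable.mk U) 2 volume := (memLp_congr_ae hae).1 hU
  have h1 : ∫ φ, avg g φ * U φ = ∫ φ, avg g φ * (hU.aestronglyMeasurable.mk U) φ :=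
    integral_congr_ae (hae.mono fun x hx => by dsimp only; rw [hx])
  rw [h1, avg_adjoint_core hgc hg hU'2 hU.aestronglyMeasurable.stronglyMeasurable_mk,
    ← avg_congr_ae hae]

lemma monoOn_aux {s : Set ℝ} {u u' : ℝ → ℝ} (hconv : Convex ℝ s)
    (hu : ∀ x ∈ s, HasDerivWithinAt u (u' x) s x)
    (h0 : ∀ x ∈ s, 0 ≤ u' x) : MonotoneOn u s :=
  monotoneOn_of_hasDerivWithinAt_nonneg hconv
    (fun x hx => (hu x hx).continuousWithinAt)
    (fun x hx => ((hu x (interior_subset hx)).mono interior_subset))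
    (fun x hx => h0 x (interior_subset hx))

lemma antiOn_aux {s : Set ℝ} {u u' : ℝ → ℝ} (hconv : Convex ℝ s)
    (hu : ∀ x ∈ s, HasDerivWithinAt u (u' x) s x)
    (h0 : ∀ x ∈ s, u' x ≤ 0) : AntitoneOn u s :=
  antitoneOn_of_hasDerivWithinAt_nonpos hconv
    (fun x hx => (hu x hx).continuousWithinAt)
    (fun x hx => ((hu x (interior_subset hx)).mono interior_subset))
    (fun x hx => h0 x (interior_subset hx))

lemma tangent_lower {f f' f'' : ℝ → ℝ} {s : Set ℝ} (hconv : Convex ℝ s)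
    (hf : ∀ x ∈ s, HasDerivWithinAt f (f' x) s x)
    (hf' : ∀ x ∈ s, HasDerivWithinAt f' (f'' x) s x)
    {c : ℝ} (hc : ∀ x ∈ s, c ≤ f'' x) {a b : ℝ} (ha : a ∈ s) (hb : b ∈ s) :
    f a + f' a * (b - a) + c/2 * (b - a)^2 ≤ f b := by
  have hmono : MonotoneOn (fun y => f' y - c * y) s := by
    apply monoOn_aux hconv (u' := fun x => f'' x - c)
    · intro x hx
      simpa using (hf' x hx).fun_sub (((hasDerivWithinAt_id x s).const_mul c))
    · intro x hx; linarith [hc x hx]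
  set g : ℝ → ℝ := fun x => f x - f a - f' a * (x - a) - c/2 * (x - a)^2 with hgdef
  have hg : ∀ x ∈ s, HasDerivWithinAt g (f' x - f' a - c * (x - a)) s x := by
    intro x hx
    have hq : HasDerivWithinAt (fun y => c/2 * (y - a)^2) (c/2 * (2 * (x - a)^1 * 1)) s x :=
      (((hasDerivWithinAt_id x s).sub_const a).pow 2).const_mul (c/2)
    have hlin : HasDerivWithinAt (fun y => f' a * (y - a)) (f' a * 1) s x :=
      ((hasDerivWithinAt_id x s).sub_const a).const_mul (f' a)
    have := (((hf x hx).sub_const (f a)).fun_sub hlin).fun_sub hq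
    exact this.congr_deriv (by ring)
  have hga : g a = 0 := by simp [hgdef]
  have key : 0 ≤ g b := by
    rcases le_total a b with hab | hab
    · have hmg : MonotoneOn g (s ∩ Ici a) := by
        apply monoOn_aux (hconv.inter (convex_Ici a))
          (u' := fun x => f' x - f' a - c * (x - a))
        · exact fun x hx => (hg x hx.1).mono inter_subset_left
        · intro x hx
          have h1 := hmono ha hx.1 hx.2
          simp only at h1
          linarith
      have := hmg ⟨ha, le_refl a⟩ ⟨hb, hab⟩ hab
      rw [hga] at this; exact this
    · have hmg : AntitoneOn g (s ∩ Iic a) := by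
        apply antiOn_aux (hconv.inter (convex_Iic a))
          (u' := fun x => f' x - f' a - c * (x - a))
        · exact fun x hx => (hg x hx.1).mono inter_subset_left
        · intro x hx
          have h1 := hmono hx.1 ha hx.2
          simp only at h1
          linarith
      have := hmg ⟨hb, hab⟩ ⟨ha, le_refl a⟩ hab
      rw [hga] at this; exact this
  simp only [hgdef] at key
  linarith

lemma deriv_le_aux {f' f'' : ℝ → ℝ} {s : Set ℝ} (hconv : Convex ℝ s)
    (hf' : ∀ x ∈ s, HasDerivWithinAt f' (f'' x) s x)
    {C : ℝ} (hC : ∀ x ∈ s, f'' x ≤ C) {a b : ℝ} (ha : a ∈ s) (hb : b ∈ s) (hab : a ≤ b) :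
    f' b - f' a ≤ C * (b - a) := by
  have hmono : MonotoneOn (fun y => C * y - f' y) s := by
    apply monoOn_aux hconv (u' := fun x => C - f'' x)
    · intro x hx
      simpa using (((hasDerivWithinAt_id x s).const_mul C)).fun_sub (hf' x hx)
    · intro x hx; linarith [hC x hx]
  have := hmono ha hb hab
  simp only at this
  linarith

lemma deriv_ge_aux {f' f'' : ℝ → ℝ} {s : Set ℝ} (hconv : Convex ℝ s)
    (hf' : ∀ x ∈ s, HasDerivWithinAt f' (f'' x) s x)
    {c : ℝ} (hc : ∀ x ∈ s, c ≤ f'' x) {a b : ℝ} (ha : a ∈ s) (hb : b ∈ s) (hab : a ≤ b) :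
    c * (b - a) ≤ f' b - f' a := by
  have hmono : MonotoneOn (fun y => f' y - c * y) s := by
    apply monoOn_aux hconv (u' := fun x => f'' x - c)
    · intro x hx
      simpa using (hf' x hx).fun_sub (((hasDerivWithinAt_id x s).const_mul c))
    · intro x hx; linarith [hc x hx]
  have := hmono ha hb hab
  simp only at this
  linarith

/-- derivative facts for the potential -/
lemma pot_derivs {Φ : ℝ → ℝ} {γ : ℝ} (hγ : 0 < γ) (hΦ : StandingAssumptions Φ γ) :
    (∀ x ∈ Set.Icc (-Real.sqrt (2*γ)) (Real.sqrt (2*γ)),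
      HasDerivWithinAt Φ (Phi' Φ γ x) (Set.Icc (-Real.sqrt (2*γ)) (Real.sqrt (2*γ))) x) ∧
    (∀ x ∈ Set.Icc (-Real.sqrt (2*γ)) (Real.sqrt (2*γ)),
      HasDerivWithinAt (Phi' Φ γ) (Phi'' Φ γ x)
        (Set.Icc (-Real.sqrt (2*γ)) (Real.sqrt (2*γ))) x) := by
  set s := Real.sqrt (2*γ) with hs
  have hs0 : 0 < s := Real.sqrt_pos.2 (by linarith)
  have huniq : UniqueDiffOn ℝ (Set.Icc (-s) s) := uniqueDiffOn_Icc (by linarith)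
  constructor
  · intro x hx
    have := (hΦ.1.differentiableOn (by norm_num)) x hx
    exact this.hasDerivWithinAt
  · intro x hx
    have h1 : ContDiffOn ℝ 1 (derivWithin Φ (Set.Icc (-s) s)) (Set.Icc (-s) s) := by
      have := hΦ.1.derivWithin huniq (m := 1) (by norm_num)
      exact this
    have h2 : DifferentiableWithinAt ℝ (Phi' Φ γ) (Set.Icc (-s) s) x :=
      (h1.differentiableOn (by norm_num)) x hx
    have h3 : Phi'' Φ γ x = derivWithin (Phi' Φ γ) (Set.Icc (-s) s) x := by
      show iteratedDerivWithin 2 Φ (Set.Icc (-s) s) x = _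
      rw [iteratedDerivWithin_succ]
      apply derivWithin_congr
      · intro y hy
        exact congrFun iteratedDerivWithin_one y
      · exact congrFun iteratedDerivWithin_one x
    rw [h3]
    exact h2.hasDerivWithinAt


open scoped RealInnerProductSpace

set_option maxHeartbeats 1000000 in
/-- properties of the improvement operator `T_γ` on `B_γ ∖ M`. -/
theorem statement9 (γ : ℝ) (hγ : 0 < γ) (Φ : ℝ → ℝ) (hΦ : StandingAssumptions Φ γ)
    (m : ℝ)
    (hm : m = sInf (Phi'' Φ γ '' Set.Icc (-Real.sqrt (2*γ)) (Real.sqrt (2*γ))))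
    (W : ℝ → ℝ) (hW : memB γ W) (hpos : 0 < PE Φ W) :
    (1/2) * (∫ φ : ℝ, (Timp Φ γ W φ)^2) = γ ∧
    0 < PE Φ (Timp Φ γ W) ∧
    PE Φ (Timp Φ γ W) - PE Φ W ≥
      m/2 * (∫ φ : ℝ, (avg (Timp Φ γ W) φ - avg W φ)^2) ∧
    (PE Φ (Timp Φ γ W) = PE Φ W ↔ Timp Φ γ W =ᵐ[volume] W) := by
  obtain ⟨hd1, hd2⟩ := pot_derivs hγ hΦ
  set s := Real.sqrt (2*γ) with hsdef
  have hs0 : 0 < s := Real.sqrt_pos.2 (by linarith)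
  have hssq : s^2 = 2*γ := Real.sq_sqrt (by linarith)
  set I := Set.Icc (-s) s with hI
  have hIconv : Convex ℝ I := convex_Icc _ _
  have h0I : (0:ℝ) ∈ I := ⟨by linarith, by linarith⟩
  have huniq : UniqueDiffOn ℝ I := uniqueDiffOn_Icc (by linarith)
  -- bounds on Φ''
  have hΦ''cont : ContinuousOn (Phi'' Φ γ) I :=
    hΦ.1.continuousOn_iteratedDerivWithin (by norm_num) huniq
  obtain ⟨x₀, hx₀I, hx₀max⟩ := isCompact_Icc.exists_isMaxOn ⟨0, h0I⟩ hΦ''cont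
  set M := Phi'' Φ γ x₀ with hMdef
  have hM : ∀ x ∈ I, Phi'' Φ γ x ≤ M := fun x hx => hx₀max hx
  have hM0 : 0 ≤ M := hΦ.2.1 x₀ hx₀I
  have hm_le : ∀ x ∈ I, m ≤ Phi'' Φ γ x := by
    intro x hx
    rw [hm]
    exact csInf_le ⟨0, fun y hy => by
      obtain ⟨z, hz, rfl⟩ := hy; exact hΦ.2.1 z hz⟩ (Set.mem_image_of_mem _ hx)
  have hm0 : 0 ≤ m := by
    rw [hm]
    exact Real.sInf_nonneg (fun y hy => by obtain ⟨z, hz, rfl⟩ := hy; exact hΦ.2.1 z hz)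
  -- Taylor-type inequalities
  have Tlow : ∀ x ∈ I, ∀ y ∈ I,
      Φ x + Phi' Φ γ x * (y - x) + m/2 * (y - x)^2 ≤ Φ y :=
    fun x hx y hy => tangent_lower hIconv hd1 hd2 hm_le hx hy
  have Tup : ∀ x ∈ I, ∀ y ∈ I,
      Φ y ≤ Φ x + Phi' Φ γ x * (y - x) + M/2 * (y - x)^2 := by
    intro x hx y hy
    have h := tangent_lower (f := fun z => -Φ z) (f' := fun z => -(Phi' Φ γ z))
      (f'' := fun z => -(Phi'' Φ γ z)) hIconv (fun z hz => (hd1 z hz).neg)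
      (fun z hz => (hd2 z hz).neg) (c := -M) (fun z hz => neg_le_neg (hM z hz)) hx hy
    have e : (-M)/2 * (y-x)^2 = -(M/2 * (y-x)^2) := by ring
    simp only [e] at h
    linarith
  have hΦ00 : Φ 0 = 0 := hΦ.2.2.1
  have hΦ'00 : Phi' Φ γ 0 = 0 := hΦ.2.2.2.1
  have hPhi_nonneg : ∀ x ∈ I, 0 ≤ Φ x := by
    intro x hx
    have h := Tlow 0 h0I x hx
    rw [hΦ00, hΦ'00] at h
    nlinarith [sq_nonneg (x - 0), mul_nonneg hm0 (sq_nonneg (x - 0))]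
  have hPhi_ub : ∀ x ∈ I, Φ x ≤ M/2 * x^2 := by
    intro x hx
    have h := Tup 0 h0I x hx
    rw [hΦ00, hΦ'00] at h
    simpa using h
  have hPhi_le_mul : ∀ x ∈ I, Φ x ≤ Phi' Φ γ x * x := by
    intro x hx
    have h := Tlow x hx 0 h0I
    rw [hΦ00] at h
    nlinarith [mul_nonneg hm0 (sq_nonneg (0 - x))]
  have hPhi'_bound : ∀ x ∈ I, |Phi' Φ γ x| ≤ M * |x| := by
    intro x hx
    rcases le_total 0 x with hx0 | hx0
    · have h1 := deriv_le_aux hIconv hd2 hM h0I hx hx0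
      have h2 := deriv_ge_aux hIconv hd2 (c := 0) (fun z hz => hΦ.2.1 z hz) h0I hx hx0
      rw [hΦ'00] at h1 h2
      rw [abs_of_nonneg (by linarith), abs_of_nonneg hx0]
      linarith
    · have h1 := deriv_le_aux hIconv hd2 hM hx h0I hx0
      have h2 := deriv_ge_aux hIconv hd2 (c := 0) (fun z hz => hΦ.2.1 z hz) hx h0I hx0
      rw [hΦ'00] at h1 h2
      rw [abs_of_nonpos (by linarith), abs_of_nonpos hx0]
      linarith
  -- avg maps into I
  have havg_mem : ∀ {U : ℝ → ℝ}, MemLp U 2 volume → (∫ φ, (U φ)^2) ≤ 2*γ →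
      ∀ φ, avg U φ ∈ I := by
    intro U hU hUg φ
    have h1 : (avg U φ)^2 ≤ 2*γ :=
      (sq_avg_le_setIntegral hU φ).trans
        ((setIntegral_le_integral (integrable_sq_of_memLp hU)
          (Eventually.of_forall fun x => sq_nonneg _)).trans hUg)
    have h2 : |avg U φ| ≤ s := by
      have h3 := Real.sqrt_le_sqrt h1
      rwa [Real.sqrt_sq_eq_abs] at h3
    exact Set.mem_Icc.2 (abs_le.1 h2)
  -- the main objects
  have hW2 := hW.1
  set A := avg W with hA
  have hA2 : MemLp A 2 volume := memLp_avg hW2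
  have hAc : Continuous A := continuous_avg hW2
  have hAmem : ∀ φ, A φ ∈ I := havg_mem hW2 hW.2
  set g := fun φ => Phi' Φ γ (A φ) with hg
  have hΦ'cont : ContinuousOn (Phi' Φ γ) I := hΦ.1.continuousOn_derivWithin huniq (by norm_num)
  have hgc : Continuous g := hΦ'cont.comp_continuous hAc hAmem
  have hg2 : MemLp g 2 volume := by
    have hAabs : MemLp (fun φ => |A φ|) 2 volume := by
      simpa [Real.norm_eq_abs] using hA2.norm
    refine MemLp.of_le (hAabs.const_mul M) hgc.aestronglyMeasurable ?_
    filter_upwards with φ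
    rw [Real.norm_eq_abs, Real.norm_eq_abs]
    exact (hPhi'_bound (A φ) (hAmem φ)).trans (le_abs_self _)
  set D := dPE Φ γ W with hD
  have hDavg : D = avg g := rfl
  have hDc : Continuous D := by rw [hDavg]; exact continuous_avg hg2
  have hD2 : MemLp D 2 volume := by rw [hDavg]; exact memLp_avg hg2
  set nD := ∫ ψ, (D ψ)^2 with hnD
  have hnD0 : 0 ≤ nD := integral_nonneg fun _ => sq_nonneg _
  -- PE W integrable
  have hPEint : Integrable (fun φ => Φ (A φ)) volume := by
    by_contra hcon
    rw [show PE Φ W = ∫ φ, Φ (A φ) from rfl, integral_undef hcon] at hpos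
    exact lt_irrefl 0 hpos
  have hgA_int : Integrable (fun φ => g φ * A φ) volume := integrable_mul_of_memLp hg2 hA2
  have hPE_le : PE Φ W ≤ ∫ φ, g φ * A φ := by
    refine integral_mono hPEint hgA_int ?_
    intro φ
    exact hPhi_le_mul (A φ) (hAmem φ)
  have hadj : ∫ φ, D φ * W φ = ∫ φ, g φ * A φ := by
    have h := avg_adjoint hgc hg2 hW2
    rw [hDavg]
    exact h
  have hDW_pos : 0 < ∫ φ, D φ * W φ := by rw [hadj]; linarith
  have hnD_pos : 0 < nD := by
    rcases lt_or_eq_of_le hnD0 with h | h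
    · exact h
    · exfalso
      have hDsq0 : (fun ψ => (D ψ)^2) =ᵐ[volume] 0 := by
        refine (integral_eq_zero_iff_of_nonneg_ae (Eventually.of_forall fun x => sq_nonneg (D x))
          (by rw [hDavg]; exact integrable_avg_sq hg2)).1 ?_
        rw [← hnD, ← h]
      have hDae : D =ᵐ[volume] 0 := by
        filter_upwards [hDsq0] with x hx
        have : (D x)^2 = 0 := hx
        exact pow_eq_zero_iff two_ne_zero |>.1 this
      have h0 : ∫ φ, D φ * W φ = 0 := by
        rw [show (0:ℝ) = ∫ (_ : ℝ), (0:ℝ) from (integral_zero ℝ ℝ).symm]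
        apply integral_congr_ae
        filter_upwards [hDae] with φ hφ
        simp [hφ]
      linarith
  -- Lp elements and Cauchy-Schwarz
  set FD := hD2.toLp D with hFD
  set FW := hW2.toLp W with hFW
  have hFDcoe : ⇑FD =ᵐ[volume] D := MemLp.coeFn_toLp _
  have hFWcoe : ⇑FW =ᵐ[volume] W := MemLp.coeFn_toLp _
  have hinnerDW : (inner ℝ FD FW : ℝ) = ∫ φ, D φ * W φ := by
    rw [MeasureTheory.L2.inner_def]
    apply integral_congr_ae
    filter_upwards [hFDcoe, hFWcoe] with φ h1 h2
    rw [h1, h2]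
    simp [RCLike.inner_apply, mul_comm]
  have hnormFD : ‖FD‖ = Real.sqrt nD := by
    have h1 : (inner ℝ FD FD : ℝ) = nD := by
      rw [MeasureTheory.L2.inner_def, hnD]
      apply integral_congr_ae
      filter_upwards [hFDcoe] with φ h1
      rw [h1]
      simp [RCLike.inner_apply, sq]
    have h2 : ‖FD‖^2 = nD := by rw [← real_inner_self_eq_norm_sq]; exact h1
    rw [← h2, Real.sqrt_sq (norm_nonneg _)]
  have hnormFW_le : ‖FW‖ ≤ s := by
    have h1 : (inner ℝ FW FW : ℝ) = ∫ φ, (W φ)^2 := by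
      rw [MeasureTheory.L2.inner_def]
      apply integral_congr_ae
      filter_upwards [hFWcoe] with φ h1
      rw [h1]
      simp [RCLike.inner_apply, sq]
    have h2 : ‖FW‖^2 = ∫ φ, (W φ)^2 := by rw [← real_inner_self_eq_norm_sq]; exact h1
    nlinarith [norm_nonneg FW, hW.2]
  have hCS : ∫ φ, D φ * W φ ≤ Real.sqrt nD * s :=
    calc ∫ φ, D φ * W φ = (inner ℝ FD FW : ℝ) := hinnerDW.symm
      _ ≤ ‖FD‖ * ‖FW‖ := real_inner_le_norm _ _
      _ ≤ Real.sqrt nD * s := by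
          rw [hnormFD]
          exact mul_le_mul_of_nonneg_left hnormFW_le (Real.sqrt_nonneg _)
  -- the improved function
  set c := s / Real.sqrt nD with hc
  have hsqnD_pos : 0 < Real.sqrt nD := Real.sqrt_pos.2 hnD_pos
  have hcpos : 0 < c := div_pos hs0 hsqnD_pos
  have hV : Timp Φ γ W = fun φ => c * D φ := rfl
  have hV2 : MemLp (Timp Φ γ W) 2 volume := by rw [hV]; exact hD2.const_mul c
  have hVsq_int : ∫ φ, (Timp Φ γ W φ)^2 = c^2 * nD := by
    rw [hV]
    have e : (fun φ => (c * D φ)^2) = fun φ => c^2 * (D φ)^2 := funext fun φ => by ring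
    rw [show (fun φ => ((fun φ => c * D φ) φ)^2) = fun φ => c^2 * (D φ)^2 from e,
      integral_const_mul, hnD]
  have hc2 : c^2 * nD = 2*γ := by
    rw [hc, div_pow, Real.sq_sqrt hnD0, hssq]
    field_simp
  have part1 : (1/2) * (∫ φ, (Timp Φ γ W φ)^2) = γ := by rw [hVsq_int, hc2]; ring
  -- averaged improved function
  set AV := avg (Timp Φ γ W) with hAV
  have hAV2 : MemLp AV 2 volume := memLp_avg hV2
  have hAVc : Continuous AV := continuous_avg hV2
  have hAVmem : ∀ φ, AV φ ∈ I := havg_mem hV2 (by rw [hVsq_int, hc2])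
  have hsub2 : MemLp (fun φ => AV φ - A φ) 2 volume := hAV2.sub hA2
  have hgsub_int : Integrable (fun φ => g φ * (AV φ - A φ)) volume :=
    integrable_mul_of_memLp hg2 hsub2
  have hsubsq_int : Integrable (fun φ => (AV φ - A φ)^2) volume := integrable_sq_of_memLp hsub2
  have hPEVint : Integrable (fun φ => Φ (AV φ)) volume := by
    refine ((integrable_avg_sq hV2).const_mul (M/2)).mono'
      ((hΦ.1.continuousOn.comp_continuous hAVc hAVmem).aestronglyMeasurable) ?_
    filter_upwards with φ
    rw [Real.norm_eq_abs, abs_of_nonneg (hPhi_nonneg _ (hAVmem φ))]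
    exact hPhi_ub _ (hAVmem φ)
  -- the key inequality
  have hptw : ∀ φ, 0 ≤ Φ (AV φ) - Φ (A φ) - g φ * (AV φ - A φ) - m/2 * (AV φ - A φ)^2 := by
    intro φ
    have h := Tlow (A φ) (hAmem φ) (AV φ) (hAVmem φ)
    have hgφ : g φ = Phi' Φ γ (A φ) := rfl
    rw [hgφ]
    linarith
  have hkey : 0 ≤ PE Φ (Timp Φ γ W) - PE Φ W - (∫ φ, g φ * (AV φ - A φ))
      - m/2 * ∫ φ, (AV φ - A φ)^2 := by
    have h1 : Integrable (fun φ => m/2 * (AV φ - A φ)^2) volume := hsubsq_int.const_mul _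
    have h2 : 0 ≤ ∫ φ, (Φ (AV φ) - Φ (A φ) - g φ * (AV φ - A φ) - m/2 * (AV φ - A φ)^2) :=
      integral_nonneg hptw
    have i12 : Integrable (fun φ => Φ (AV φ) - Φ (A φ)) volume := hPEVint.sub hPEint
    have i123 : Integrable (fun φ => Φ (AV φ) - Φ (A φ) - g φ * (AV φ - A φ)) volume :=
      i12.sub hgsub_int
    rw [integral_sub i123 h1, integral_sub i12 hgsub_int,
        integral_sub hPEVint hPEint, integral_const_mul] at h2
    have hPEV : PE Φ (Timp Φ γ W) = ∫ φ, Φ (AV φ) := rfl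
    have hPEW : PE Φ W = ∫ φ, Φ (A φ) := rfl
    rw [hPEV, hPEW]
    linarith
  -- the first-order term
  have hX : ∫ φ, g φ * (AV φ - A φ) = c * nD - ∫ φ, D φ * W φ := by
    have e : (fun φ => g φ * (AV φ - A φ)) = fun φ => g φ * AV φ - g φ * A φ :=
      funext fun φ => by ring
    rw [e, integral_sub (integrable_mul_of_memLp hg2 hAV2) (integrable_mul_of_memLp hg2 hA2)]
    have h1 : ∫ φ, g φ * AV φ = c * nD := by
      have hadj2 := avg_adjoint hgc hg2 hV2
      rw [← hAV] at hadj2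
      rw [← hadj2]
      have e2 : (fun φ => avg g φ * Timp Φ γ W φ) = fun φ => c * (D φ)^2 := by
        funext φ
        rw [hV, ← hDavg]
        dsimp only
        ring
      rw [e2, integral_const_mul, hnD]
    rw [h1, hadj]
  have hXval : c * nD = s * Real.sqrt nD := by
    have h2 : Real.sqrt nD * Real.sqrt nD = nD := Real.mul_self_sqrt hnD0
    rw [hc, div_mul_eq_mul_div, div_eq_iff hsqnD_pos.ne']
    linear_combination (-s) * h2
  have hX0 : 0 ≤ ∫ φ, g φ * (AV φ - A φ) := by
    rw [hX, hXval]
    have hcomm : Real.sqrt nD * s = s * Real.sqrt nD := mul_comm _ _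
    linarith
  have hY0 : 0 ≤ ∫ φ, (AV φ - A φ)^2 := integral_nonneg fun _ => sq_nonneg _
  have part3 : PE Φ (Timp Φ γ W) - PE Φ W ≥ m/2 * ∫ φ, (AV φ - A φ)^2 := by linarith
  have part2 : 0 < PE Φ (Timp Φ γ W) := by
    linarith [mul_nonneg (show (0:ℝ) ≤ m/2 by linarith) hY0]
  refine ⟨part1, part2, part3, ?_, ?_⟩
  · -- equality implies a.e. equality
    intro hPEeq
    have hXeq : ∫ φ, g φ * (AV φ - A φ) = 0 := by
      have h1 : 0 ≤ m/2 * ∫ φ, (AV φ - A φ)^2 :=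
        mul_nonneg (by linarith) hY0
      linarith
    have hDWeq : ∫ φ, D φ * W φ = s * Real.sqrt nD := by
      rw [hX, hXval] at hXeq
      linarith
    have h2 : s * Real.sqrt nD ≤ Real.sqrt nD * ‖FW‖ := by
      calc s * Real.sqrt nD = ∫ φ, D φ * W φ := hDWeq.symm
        _ = (inner ℝ FD FW : ℝ) := hinnerDW.symm
        _ ≤ ‖FD‖ * ‖FW‖ := real_inner_le_norm _ _
        _ = Real.sqrt nD * ‖FW‖ := by rw [hnormFD]
    have hFWs : ‖FW‖ = s := by
      refine le_antisymm hnormFW_le ?_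
      have h2' : Real.sqrt nD * s ≤ Real.sqrt nD * ‖FW‖ := by
        calc Real.sqrt nD * s = s * Real.sqrt nD := mul_comm _ _
          _ ≤ Real.sqrt nD * ‖FW‖ := h2
      exact le_of_mul_le_mul_left h2' hsqnD_pos
    have hinner_eq_norms : (inner ℝ FD FW : ℝ) = ‖FD‖ * ‖FW‖ := by
      rw [hinnerDW, hDWeq, hnormFD, hFWs]
      ring
    have hpar := inner_eq_norm_mul_iff_real.1 hinner_eq_norms
    rw [hFWs, hnormFD] at hpar
    -- hpar : s • FD = √nD • FW
    have hFWeq : c • FD = FW := by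
      have h4 := congrArg (fun z => (Real.sqrt nD)⁻¹ • z) hpar
      simp only [smul_smul] at h4
      rw [inv_mul_cancel₀ hsqnD_pos.ne', one_smul] at h4
      rw [hc, div_eq_mul_inv, mul_comm]
      exact h4
    have h3 : W =ᵐ[volume] fun φ => c * D φ := by
      calc W =ᵐ[volume] ⇑FW := hFWcoe.symm
        _ =ᵐ[volume] ⇑(c • FD) := by rw [hFWeq]
        _ =ᵐ[volume] fun φ => c * D φ := by
            filter_upwards [Lp.coeFn_smul c FD, hFDcoe] with φ h5 h6
            rw [h5]
            simp [h6, smul_eq_mul]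
    rw [hV]
    exact h3.symm
  · intro hVW
    have h := avg_congr_ae hVW
    show PE Φ (Timp Φ γ W) = PE Φ W
    unfold PE
    rw [h]
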